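/- Backward direction of the kSUM reduction for three machines: let x_1,…,x_h be positive integers, T = Σ_{i=1}^h x_i, and k, B positive integers with 1 ≤ k < h and B < T. Consider the three-machine JIT flow-shop instance with kh+2 jobs: for each i ∈ {1,…,k} and j ∈ {1,…,h} a job J_{ij} with p^(1)_{ij} = x_j, p^(2)_{ij} = T − x_j, p^(3)_{ij} = 1, w_{ij} = T, d_{ij} = kT + i + 1; a job J_{kh+1} with p^(1)_{kh+1} = 1, p^(2)_{kh+1} = B, p^(3)_{kh+1} = 1, w_{kh+1} = k²(T+1)², d_{kh+1} = B + 2; and a job J_{kh+2} with p^(1)_{kh+2} = kT − B, p^(2)_{kh+2} = kT, p^(3)_{kh+2} = 1, w_{kh+2} = k²(T+1)², d_{kh+2} = 2kT + 2. If this instance admits a feasible set E with Σ_{j∈E} w_j ≥ kT + 2k²(T+1)², then there exist indices j_1,…,j_k ∈ {1,…,h} (not necessarily distinct) with x_{j_1} + … + x_{j_k} = B; moreover any such E contains both J_{kh+1} and J_{kh+2} and exactly k of the jobs J_{ij}, whose x-values sum to B. -/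

import Mathlib

open Finset

/-- A just-in-time flow-shop instance on `m` machines with jobs of type `J`:
`p i j` is the (positive integer) processing time of job `j` on machine `i`,
`d j` its positive integer due date and `w j` its positive integer weight. -/
structure JITInstance (m : ℕ) (J : Type) where
  p : Fin m → J → ℕ
  d : J → ℕ
  w : J → ℕ
  p_pos : ∀ i j, 0 < p i j
  d_pos : ∀ j, 0 < d j
  w_pos : ∀ j, 0 < w j

/-- `S` is a JIT schedule of the job set `E`: on every machine the processing
intervals `(S i j, S i j + p i j]` of distinct jobs of `E` are pairwise disjoint,
each job's operation on machine `i+1` starts no earlier than its completion on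
machine `i`, and every job of `E` completes on the last machine exactly at its
due date.  (Start times are nonnegative automatically, being naturals.) -/
def IsJITSchedule {m : ℕ} {J : Type} (I : JITInstance m J)
    (E : Finset J) (S : Fin m → J → ℕ) : Prop :=
  (∀ i : Fin m, ∀ j ∈ E, ∀ j' ∈ E, j ≠ j' →
      S i j + I.p i j ≤ S i j' ∨ S i j' + I.p i j' ≤ S i j) ∧
  (∀ j ∈ E, ∀ i i' : Fin m, i'.val = i.val + 1 →
      S i j + I.p i j ≤ S i' j) ∧
  (∀ j ∈ E, ∀ i : Fin m, i.val = m - 1 →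
      S i j + I.p i j = I.d j)

/-- A job set is feasible if it admits a JIT schedule. -/
def Feasible {m : ℕ} {J : Type} (I : JITInstance m J) (E : Finset J) : Prop :=
  ∃ S : Fin m → J → ℕ, IsJITSchedule I E S

/-- The three-machine JIT flow-shop instance constructed in the kSUM reduction:
for each `i ∈ {1,…,k}`, `j ∈ {1,…,h}` a job `J_{ij}` (encoded `Sum.inl (i, j)`,
0-indexed) with `p¹ = x j`, `p² = T - x j`, `p³ = 1`, `w = T`, `d = kT + i + 1`;
a job `J_{kh+1}` (encoded `Sum.inr false`) with `p¹ = 1`, `p² = B`, `p³ = 1`,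
`w = k²(T+1)²`, `d = B + 2`; and a job `J_{kh+2}` (encoded `Sum.inr true`) with
`p¹ = kT - B`, `p² = kT`, `p³ = 1`, `w = k²(T+1)²`, `d = 2kT + 2`, where
`T = ∑ i, x i`. -/
def ksumInstance3 (h k B : ℕ) (x : Fin h → ℕ) (hx : ∀ i, 0 < x i)
    (hk : 1 ≤ k) (hkh : k < h) (hB : 0 < B) (hBT : B < ∑ i, x i) :
    JITInstance 3 (Fin k × Fin h ⊕ Bool) where
  p := fun i jb =>
    if i.val = 0 then
      Sum.elim (fun q => x q.2)
        (fun b => if b then k * (∑ i, x i) - B else 1) jb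
    else if i.val = 1 then
      Sum.elim (fun q => (∑ i, x i) - x q.2)
        (fun b => if b then k * (∑ i, x i) else B) jb
    else 1
  d := Sum.elim (fun q => k * (∑ i, x i) + q.1.val + 2)
    (fun b => if b then 2 * k * (∑ i, x i) + 2 else B + 2)
  w := Sum.elim (fun _ => ∑ i, x i)
    (fun _ => k ^ 2 * ((∑ i, x i) + 1) ^ 2)
  p_pos := by
    have hT : (∑ i, x i) ≤ k * (∑ i, x i) := Nat.le_mul_of_pos_left _ (by omega)
    have hxT : ∀ j : Fin h, x j < ∑ i, x i := by
      intro j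
      obtain ⟨j', hj'⟩ := Fintype.exists_ne_of_one_lt_card
        (by simpa using (by omega : 1 < h)) j
      exact Finset.single_lt_sum hj' (Finset.mem_univ _)
        (Finset.mem_univ _) (hx j') (fun _ _ _ => Nat.zero_le _)
    intro i jb
    try dsimp only
    split
    · rcases jb with ⟨a, j⟩ | b
      · simpa using hx j
      · rcases b with _ | _ <;> simp <;> omega
    · split
      · rcases jb with ⟨a, j⟩ | b
        · have := hxT j
          simp only [Sum.elim_inl]
          omega
        · rcases b with _ | _ <;> simp <;> omega
      · exact one_pos
  d_pos := by
    rintro (⟨a, j⟩ | b)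
    · simp only [Sum.elim_inl]
      omega
    · rcases b with _ | _ <;> simp
  w_pos := by
    rintro (⟨a, j⟩ | b)
    · simp only [Sum.elim_inl]
      omega
    · simp only [Sum.elim_inr]
      exact Nat.mul_pos (pow_pos (by omega : 0 < k) 2)
        (pow_pos (by omega : 0 < (∑ i, x i) + 1) 2)


lemma interval_packing {α : Type*} [DecidableEq α] (F : Finset α) (s len : α → ℕ) (L R : ℕ)
    (hdisj : ∀ a ∈ F, ∀ b ∈ F, a ≠ b → s a + len a ≤ s b ∨ s b + len b ≤ s a)
    (hL : ∀ a ∈ F, L ≤ s a) (hR : ∀ a ∈ F, s a + len a ≤ R) :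
    ∑ a ∈ F, len a ≤ R - L := by
  calc ∑ a ∈ F, len a = ∑ a ∈ F, (Finset.Ioc (s a) (s a + len a)).card := by
        simp [Nat.card_Ioc]
  _ = (F.biUnion fun a => Finset.Ioc (s a) (s a + len a)).card := by
        rw [Finset.card_biUnion]
        intro a ha b hb hne
        rw [Function.onFun, Finset.disjoint_left]
        intro t ht ht'
        simp only [Finset.mem_Ioc] at ht ht'
        rcases hdisj a ha b hb hne with hc | hc <;> omega
  _ ≤ (Finset.Ioc L R).card := by
        apply Finset.card_le_card
        intro t ht
        simp only [Finset.mem_biUnion, Finset.mem_Ioc] at ht ⊢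
        obtain ⟨a, ha, h1, h2⟩ := ht
        exact ⟨lt_of_le_of_lt (hL a ha) h1, h2.trans (hR a ha)⟩
  _ = R - L := Nat.card_Ioc L R

/-- backward direction of the kSUM reduction for three machines.
If the constructed instance has a feasible set `E` of total weight at least
`kT + 2k²(T+1)²`, then some `k` of the numbers `x 0, …, x (h-1)` (with
repetitions allowed) sum to `B`; moreover any such `E` contains both
`J_{kh+1}` and `J_{kh+2}` together with exactly `k` of the jobs `J_{ij}`,
whose `x`-values sum to `B`. -/
theorem ksum_three_machines_backward (h k B : ℕ) (x : Fin h → ℕ)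
    (hx : ∀ i, 0 < x i) (hk : 1 ≤ k) (hkh : k < h) (hB : 0 < B)
    (hBT : B < ∑ i, x i)
    (E : Finset (Fin k × Fin h ⊕ Bool))
    (hfeas : Feasible (ksumInstance3 h k B x hx hk hkh hB hBT) E)
    (hwt : k * (∑ i, x i) + 2 * (k ^ 2 * ((∑ i, x i) + 1) ^ 2)
      ≤ ∑ jb ∈ E, (ksumInstance3 h k B x hx hk hkh hB hBT).w jb) :
    (∃ f : Fin k → Fin h, ∑ i, x (f i) = B) ∧
    Sum.inr false ∈ E ∧ Sum.inr true ∈ E ∧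
    (E.filter (fun jb => jb.isLeft)).card = k ∧
    ∑ jb ∈ E, Sum.elim (fun q : Fin k × Fin h => x q.2) (fun _ => 0) jb = B := by
  classical
  set I := ksumInstance3 h k B x hx hk hkh hB hBT with hI
  set T := ∑ i, x i with hTdef
  -- unfolding equations for the instance, while definitional equality is available
  have pl0 : ∀ (a : Fin k) (j : Fin h), I.p 0 (Sum.inl (a, j)) = x j := fun _ _ => rfl
  have pl1 : ∀ (a : Fin k) (j : Fin h), I.p 1 (Sum.inl (a, j)) = T - x j := fun _ _ => rfl
  have pl2 : ∀ (a : Fin k) (j : Fin h), I.p 2 (Sum.inl (a, j)) = 1 := fun _ _ => rfl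
  have pf0 : I.p 0 (Sum.inr false) = 1 := rfl
  have pf1 : I.p 1 (Sum.inr false) = B := rfl
  have pt0 : I.p 0 (Sum.inr true) = k * T - B := rfl
  have pt1 : I.p 1 (Sum.inr true) = k * T := rfl
  have pt2 : I.p 2 (Sum.inr true) = 1 := rfl
  have pf2 : I.p 2 (Sum.inr false) = 1 := rfl
  have dl : ∀ (a : Fin k) (j : Fin h), I.d (Sum.inl (a, j)) = k * T + a.val + 2 :=
    fun _ _ => rfl
  have df : I.d (Sum.inr false) = B + 2 := rfl
  have dt : I.d (Sum.inr true) = 2 * (k * T) + 2 := by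
    rw [show I.d (Sum.inr true) = 2 * k * T + 2 from rfl, mul_assoc]
  have wl : ∀ (a : Fin k) (j : Fin h), I.w (Sum.inl (a, j)) = T := fun _ _ => rfl
  have wr : ∀ b : Bool, I.w (Sum.inr b) = k ^ 2 * (T + 1) ^ 2 := fun _ => rfl
  clear_value I T
  obtain ⟨S, hdisj, hprec, hdue⟩ := hfeas
  have hhT : h ≤ T := by
    rw [hTdef]
    calc h = ∑ _i : Fin h, 1 := by simp
    _ ≤ ∑ i, x i := Finset.sum_le_sum fun i _ => hx i
  have hT2 : 2 ≤ T := by omega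
  have hxT : ∀ j : Fin h, x j < T := by
    intro j
    rw [hTdef]
    obtain ⟨j', hj'⟩ := Fintype.exists_ne_of_one_lt_card
      (by simpa using (by omega : 1 < h)) j
    exact Finset.single_lt_sum hj' (Finset.mem_univ _)
      (Finset.mem_univ _) (hx j') (fun _ _ _ => Nat.zero_le _)
  have hTK : T ≤ k * T := Nat.le_mul_of_pos_left T (by omega)
  have h2K : 2 * k ≤ k * T := by
    calc 2 * k = k * 2 := by ring
    _ ≤ k * T := Nat.mul_le_mul_left k hT2
  have hkT1 : k + T ≤ k * T + 1 := by
    rcases Nat.lt_or_ge k 2 with h' | h'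
    · have : k = 1 := by omega
      subst this
      omega
    · exact le_trans (Nat.add_le_mul h' hT2) (Nat.le_succ _)
  -- schedule facts about the two special jobs
  have hf2 : Sum.inr false ∈ E → S 1 (Sum.inr false) = 1 := by
    intro hfE
    have e3 := hdue _ hfE 2 rfl
    rw [pf2, df] at e3
    have e2 := hprec _ hfE 1 2 rfl
    rw [pf1] at e2
    have e1 := hprec _ hfE 0 1 rfl
    rw [pf0] at e1
    omega
  have ht2 : Sum.inr true ∈ E → S 1 (Sum.inr true) + k * T ≤ 2 * (k * T) + 1 := by
    intro htE
    have e3 := hdue _ htE 2 rfl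
    rw [pt2, dt] at e3
    have e2 := hprec _ htE 1 2 rfl
    rw [pt1] at e2
    omega
  have ht0 : Sum.inr true ∈ E → k * T - B ≤ S 1 (Sum.inr true) := by
    intro htE
    have e1 := hprec _ htE 0 1 rfl
    rw [pt0] at e1
    omega
  have hft : Sum.inr false ∈ E → Sum.inr true ∈ E → B + 1 ≤ S 1 (Sum.inr true) := by
    intro hfE htE
    have hd := hdisj 1 _ hfE _ htE (by simp)
    rw [pf1, pt1, hf2 hfE] at hd
    rcases hd with hc | hc
    · omega
    · generalize k * T = K at hc h2K
      omega
  -- schedule facts about the regular jobs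
  have hl3 : ∀ a j, Sum.inl (a, j) ∈ E → S 2 (Sum.inl (a, j)) = k * T + a.val + 1 := by
    intro a j hjE
    have e3 := hdue _ hjE 2 rfl
    rw [pl2, dl] at e3
    omega
  have hl12 : ∀ a j, Sum.inl (a, j) ∈ E →
      S 1 (Sum.inl (a, j)) + (T - x j) ≤ k * T + a.val + 1 := by
    intro a j hjE
    have e2 := hprec _ hjE 1 2 rfl
    rw [pl1] at e2
    have := hl3 a j hjE
    omega
  have hl01 : ∀ a j, Sum.inl (a, j) ∈ E →
      S 0 (Sum.inl (a, j)) + x j ≤ S 1 (Sum.inl (a, j)) := by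
    intro a j hjE
    have e1 := hprec _ hjE 0 1 rfl
    rw [pl0] at e1
    exact e1
  -- a regular job's second operation ends before the big job's second operation starts
  have hkey : ∀ a j, Sum.inl (a, j) ∈ E → Sum.inr true ∈ E →
      S 1 (Sum.inl (a, j)) + (T - x j) ≤ S 1 (Sum.inr true) := by
    intro a j hjE htE
    have hd := hdisj 1 _ hjE _ htE (by simp)
    rw [pl1, pt1] at hd
    rcases hd with hc | hc
    · exact hc
    · exfalso
      have h12 := hl12 a j hjE
      have h0 := ht0 htE
      have hxj := hxT j
      have hak : a.val < k := a.isLt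
      have hkT1' := hkT1
      generalize hK : k * T = K at hc h12 h0 hkT1'
      omega
  -- uniqueness of regular jobs per row (machine-3 conflicts)
  have huniq : ∀ a j j', Sum.inl (a, j) ∈ E → Sum.inl (a, j') ∈ E → j = j' := by
    intro a j j' hj hj'
    by_contra hne
    have hne' : (Sum.inl (a, j) : Fin k × Fin h ⊕ Bool) ≠ Sum.inl (a, j') := by
      simp [hne]
    have hd := hdisj 2 _ hj _ hj' hne'
    rw [pl2, pl2, hl3 a j hj, hl3 a j' hj'] at hd
    omega
  -- the set of regular jobs in E
  set A := E.filter (fun jb => jb.isLeft) with hA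
  have hAmem : ∀ jb ∈ A, ∃ a j, jb = Sum.inl (a, j) ∧ Sum.inl (a, j) ∈ E := by
    intro jb hjb
    rw [hA, Finset.mem_filter] at hjb
    rcases jb with ⟨a, j⟩ | b
    · exact ⟨a, j, rfl, hjb.1⟩
    · simp at hjb
  have hinj : Set.InjOn (Sum.elim Prod.fst (fun _ => (⟨0, by omega⟩ : Fin k)))
      (A : Set (Fin k × Fin h ⊕ Bool)) := by
    intro jb h1 jb' h2 heq
    obtain ⟨a, j, rfl, hjE⟩ := hAmem jb h1
    obtain ⟨a', j', rfl, hjE'⟩ := hAmem jb' h2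
    simp only [Sum.elim_inl] at heq
    have ha : a = a' := heq
    subst ha
    have := huniq a j j' hjE hjE'
    subst this
    rfl
  have hcardA : A.card ≤ k := by
    calc A.card = (A.image (Sum.elim Prod.fst (fun _ => (⟨0, by omega⟩ : Fin k)))).card :=
          (Finset.card_image_of_injOn hinj).symm
    _ ≤ Fintype.card (Fin k) := Finset.card_le_univ _
    _ = k := Fintype.card_fin k
  -- weight computation
  have hwA : ∀ jb ∈ A, I.w jb = T := by
    intro jb hjb
    obtain ⟨a, j, rfl, _⟩ := hAmem jb hjb
    exact wl a j
  set R := E.filter (fun jb => ¬ jb.isLeft) with hR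
  have hwR : ∀ jb ∈ R, I.w jb = k ^ 2 * (T + 1) ^ 2 := by
    intro jb hjb
    rw [hR, Finset.mem_filter] at hjb
    rcases jb with ⟨a, j⟩ | b
    · simp at hjb
    · exact wr b
  have hRsub : R ⊆ {Sum.inr false, Sum.inr true} := by
    intro jb hjb
    rw [hR, Finset.mem_filter] at hjb
    rcases jb with ⟨a, j⟩ | b
    · simp at hjb
    · rcases b with _ | _ <;> simp
  have hsplit : ∑ jb ∈ A, I.w jb + ∑ jb ∈ R, I.w jb = ∑ jb ∈ E, I.w jb :=
    Finset.sum_filter_add_sum_filter_not E _ _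
  have hsumA : ∑ jb ∈ A, I.w jb = A.card * T := by
    rw [Finset.sum_congr rfl hwA, Finset.sum_const, smul_eq_mul]
  have hsumR : ∑ jb ∈ R, I.w jb = R.card * (k ^ 2 * (T + 1) ^ 2) := by
    rw [Finset.sum_congr rfl hwR, Finset.sum_const, smul_eq_mul]
  have hW : 0 < k ^ 2 * (T + 1) ^ 2 :=
    Nat.mul_pos (pow_pos (by omega) 2) (pow_pos (by omega) 2)
  have hAT : A.card * T ≤ k * T := Nat.mul_le_mul_right T hcardA
  have hwt' : k * T + 2 * (k ^ 2 * (T + 1) ^ 2) ≤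
      A.card * T + R.card * (k ^ 2 * (T + 1) ^ 2) := by
    rw [← hsumA, ← hsumR, hsplit]; exact hwt
  have hRcard : R.card = 2 := by
    rcases Nat.lt_or_ge R.card 2 with hc | hc
    · exfalso
      have hle : R.card * (k ^ 2 * (T + 1) ^ 2) ≤ k ^ 2 * (T + 1) ^ 2 := by
        calc R.card * (k ^ 2 * (T + 1) ^ 2) ≤ 1 * (k ^ 2 * (T + 1) ^ 2) :=
              Nat.mul_le_mul_right _ (by omega)
        _ = k ^ 2 * (T + 1) ^ 2 := one_mul _
      omega
    · have : ({Sum.inr false, Sum.inr true} : Finset (Fin k × Fin h ⊕ Bool)).card ≤ 2 :=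
        Finset.card_insert_le _ _ |>.trans (by simp)
      have := Finset.card_le_card hRsub
      omega
  have hReq : R = {Sum.inr false, Sum.inr true} := by
    apply Finset.eq_of_subset_of_card_le hRsub
    rw [hRcard]
    exact Finset.card_insert_le _ _ |>.trans (by simp)
  have hfE : Sum.inr false ∈ E := by
    have : Sum.inr false ∈ R := by rw [hReq]; simp
    exact (Finset.mem_filter.mp this).1
  have htE : Sum.inr true ∈ E := by
    have : Sum.inr true ∈ R := by rw [hReq]; simp
    exact (Finset.mem_filter.mp this).1
  have hAcard : A.card = k := by
    have h2W : R.card * (k ^ 2 * (T + 1) ^ 2) = 2 * (k ^ 2 * (T + 1) ^ 2) := by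
      rw [hRcard]
    have hge : k * T ≤ A.card * T := by omega
    have := Nat.le_of_mul_le_mul_right hge (by omega : 0 < T)
    omega
  -- the big job's machine-2 start
  have hstub : S 1 (Sum.inr true) ≤ k * T + 1 := by
    have := ht2 htE; omega
  have hstlb1 : B + 1 ≤ S 1 (Sum.inr true) := hft hfE htE
  -- X = sum of x-values of regular jobs in E
  set X := ∑ jb ∈ A, Sum.elim (fun q : Fin k × Fin h => x q.2) (fun _ => 0) jb with hX
  have hXE : ∑ jb ∈ E, Sum.elim (fun q : Fin k × Fin h => x q.2) (fun _ => 0) jb = X := by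
    rw [hX]
    apply (Finset.sum_subset (Finset.filter_subset _ E) _).symm
    intro jb hjbE hjbA
    rcases jb with ⟨a, j⟩ | b
    · exact absurd (by rw [Finset.mem_filter]; exact ⟨hjbE, rfl⟩) hjbA
    · rfl
  -- machine-1 packing : X ≤ B
  have hpack1 : ∑ jb ∈ E, I.p 0 jb ≤ S 1 (Sum.inr true) - 0 := by
    apply interval_packing E (S 0) (I.p 0) 0 (S 1 (Sum.inr true))
    · exact hdisj 0
    · intro jb _; exact Nat.zero_le _
    · intro jb hjb
      rcases jb with ⟨a, j⟩ | b
      · have h01 := hl01 a j hjb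
        have hk2 := hkey a j hjb htE
        rw [pl0]
        omega
      · rcases b with _ | _
        · have e0 := hprec _ hfE 0 1 rfl
          rw [pf0] at e0 ⊢
          rw [hf2 hfE] at e0
          omega
        · have e0 := hprec _ htE 0 1 rfl
          rw [pt0] at e0 ⊢
          exact e0
  have hsumE0 : ∑ jb ∈ E, I.p 0 jb = ∑ jb ∈ A, I.p 0 jb + (1 + (k * T - B)) := by
    rw [← Finset.sum_filter_add_sum_filter_not E (fun jb => jb.isLeft) (I.p 0), ← hA, ← hR,
      hReq]
    congr 1
    rw [Finset.sum_pair (by simp), pf0, pt0]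
  have hA0X : ∑ jb ∈ A, I.p 0 jb = X := by
    rw [hX]
    apply Finset.sum_congr rfl
    intro jb hjb
    obtain ⟨a, j, rfl, _⟩ := hAmem jb hjb
    exact pl0 a j
  have hXleB : X ≤ B := by
    rw [hsumE0, hA0X] at hpack1
    have hBK : B < k * T := by omega
    generalize k * T = K at hpack1 hstub hBK
    omega
  -- machine-2 packing : B ≤ X
  set F2 := insert (Sum.inr false) A with hF2
  have hF2sub : F2 ⊆ E := by
    intro jb hjb
    rcases Finset.mem_insert.mp hjb with rfl | hjb
    · exact hfE
    · exact (Finset.mem_filter.mp hjb).1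
  have hpack2 : ∑ jb ∈ F2, I.p 1 jb ≤ S 1 (Sum.inr true) - 1 := by
    apply interval_packing F2 (S 1) (I.p 1) 1 (S 1 (Sum.inr true))
    · intro a ha b hb hne
      exact hdisj 1 a (hF2sub ha) b (hF2sub hb) hne
    · intro jb hjb
      rcases Finset.mem_insert.mp hjb with rfl | hjb
      · rw [hf2 hfE]
      · obtain ⟨a, j, rfl, hjE⟩ := hAmem jb hjb
        have := hl01 a j hjE
        have := hx j
        omega
    · intro jb hjb
      rcases Finset.mem_insert.mp hjb with rfl | hjb
      · rw [pf1, hf2 hfE]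
        omega
      · obtain ⟨a, j, rfl, hjE⟩ := hAmem jb hjb
        rw [pl1]
        exact hkey a j hjE htE
  have hfnotA : Sum.inr false ∉ A := by
    intro hc
    obtain ⟨a, j, hc', _⟩ := hAmem _ hc
    simp at hc'
  have hsumF2 : ∑ jb ∈ F2, I.p 1 jb = B + ∑ jb ∈ A, I.p 1 jb := by
    rw [hF2, Finset.sum_insert hfnotA, pf1]
  have hA1X : ∑ jb ∈ A, I.p 1 jb + X = k * T := by
    rw [hX, ← Finset.sum_add_distrib]
    have hmem : ∀ jb ∈ A, I.p 1 jb + Sum.elim (fun q : Fin k × Fin h => x q.2)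
        (fun _ => 0) jb = T := by
      intro jb hjb
      obtain ⟨a, j, rfl, _⟩ := hAmem jb hjb
      rw [pl1]
      simp only [Sum.elim_inl]
      have := hxT j
      omega
    rw [Finset.sum_congr rfl hmem, Finset.sum_const, smul_eq_mul, hAcard]
  have hBleX : B ≤ X := by
    rw [hsumF2] at hpack2
    generalize k * T = K at hpack2 hstub hA1X
    omega
  have hXB : X = B := le_antisymm hXleB hBleX
  -- build the selection function f
  have hexj : ∀ a : Fin k, ∃ j : Fin h, Sum.inl (a, j) ∈ A := by
    intro a
    by_contra hc
    push_neg at hc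
    have hsub : A.image (Sum.elim Prod.fst (fun _ => (⟨0, by omega⟩ : Fin k)))
        ⊆ Finset.univ.erase a := by
      intro b hb
      obtain ⟨jb, hjb, hjbeq⟩ := Finset.mem_image.mp hb
      obtain ⟨a1, j1, rfl, _⟩ := hAmem jb hjb
      simp only [Sum.elim_inl] at hjbeq
      subst hjbeq
      refine Finset.mem_erase.mpr ⟨?_, Finset.mem_univ _⟩
      intro hc'
      subst hc'
      exact hc j1 hjb
    have : A.card ≤ k - 1 := by
      calc A.card = (A.image (Sum.elim Prod.fst (fun _ => (⟨0, by omega⟩ : Fin k)))).card :=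
            (Finset.card_image_of_injOn hinj).symm
      _ ≤ (Finset.univ.erase a).card := Finset.card_le_card hsub
      _ = k - 1 := by rw [Finset.card_erase_of_mem (Finset.mem_univ _)]; simp
    omega
  choose f hf using hexj
  have hAeq : A = Finset.univ.image (fun a : Fin k => Sum.inl (a, f a)) := by
    apply (Finset.eq_of_subset_of_card_le _ _).symm
    · intro jb hjb
      obtain ⟨a, _, rfl⟩ := Finset.mem_image.mp hjb
      exact hf a
    · rw [Finset.card_image_of_injective _ (fun a b hab => by
        simp only [Sum.inl.injEq, Prod.mk.injEq] at hab
        exact hab.1), hAcard]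
      simp
  have hsumf : ∑ i, x (f i) = B := by
    have hXf : X = ∑ a : Fin k, x (f a) := by
      rw [hX, hAeq, Finset.sum_image (by
        intro a _ b _ hab
        simp only [Sum.inl.injEq, Prod.mk.injEq] at hab
        exact hab.1)]
      simp
    omega
  exact ⟨⟨f, hsumf⟩, hfE, htE, hAcard, by rw [hXE, hXB]⟩
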